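/- Let f : M → M be a continuous map of a compact metric space (M,d), μ an ergodic f-invariant Borel probability measure, and B : M → M(d,ℝ) a continuous map such that λ₁(B,μ) = −∞, where λ₁(B,ν) := inf_{n≥1} (1/n)∫ log‖Bⁿ(x)‖ dν(x) ∈ [−∞,∞) for any f-invariant Borel probability measure ν. If (μ_j)_{j∈ℕ} is a sequence of ergodic f-invariant Borel probability measures converging to μ in the weak* topology, then limsup_{j→∞} λ₁(B,μ_j) = −∞, i.e. λ₁(B,μ_j) → −∞ as j → ∞. -/

import Mathlib

open Filter MeasureTheory Topology

/-- Operator norm (w.r.t. the Euclidean norm) of a square real matrix. -/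
noncomputable def matNorm {m : Type*} [Fintype m] [DecidableEq m] (B : Matrix m m ℝ) : ℝ :=
  ‖LinearMap.toContinuousLinearMap (Matrix.toEuclideanLin B)‖

/-- The cocycle generated by `A` over `f`: `Aⁿ(x) = A(f^{n-1}x) ⋯ A(f x) A(x)`. -/
def cocycle {M : Type*} {m : Type*} [Fintype m] [DecidableEq m]
    (f : M → M) (A : M → Matrix m m ℝ) : ℕ → M → Matrix m m ℝ
  | 0, _ => 1
  | n + 1, x => cocycle f A n (f x) * A x

/-- `log` with values in `[-∞, ∞)`, with `log r = -∞` for `r ≤ 0`. -/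
noncomputable def elog (r : ℝ) : EReal := if r ≤ 0 then ⊥ else ((Real.log r : ℝ) : EReal)

/-- The integral `∫ log g dμ ∈ [-∞,∞)` of the `[-∞,∞)`-valued function `log ∘ g` (for `g ≥ 0`),
defined via monotone truncations. -/
noncomputable def elogIntegral {M : Type*} [MeasurableSpace M] (μ : Measure M) (g : M → ℝ) :
    EReal :=
  ⨅ m : ℕ, (((∫ x, (if g x ≤ 0 then -(m : ℝ) else max (Real.log (g x)) (-(m : ℝ))) ∂μ) : ℝ) : EReal)

/-- The largest Lyapunov exponent `λ₁(A,μ) = inf_{n ≥ 1} (1/n) ∫ log ‖Aⁿ(x)‖ dμ(x) ∈ [-∞,∞)`. -/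
noncomputable def lyapMax {M : Type*} [MeasurableSpace M] {m : Type*} [Fintype m] [DecidableEq m]
    (f : M → M) (A : M → Matrix m m ℝ) (μ : Measure M) : EReal :=
  ⨅ n : ℕ, (((((n : ℝ) + 1)⁻¹ : ℝ)) : EReal) *
    elogIntegral μ (fun x => matNorm (cocycle f A (n + 1) x))

/-- The spectral radius of a real square matrix: the largest modulus of its complex
eigenvalues. -/
noncomputable def specRad {m : Type*} [Fintype m] [DecidableEq m] (B : Matrix m m ℝ) : ℝ :=
  sSup ((fun z : ℂ => ‖z‖) '' spectrum ℂ (B.map (fun r => (r : ℂ))))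

/-- The largest Lyapunov exponent of the cocycle at a periodic point of period `n`:
`(1/n) log (spectral radius of Aⁿ(p)) ∈ [-∞,∞)`. -/
noncomputable def lyapMaxPeriodic {M : Type*} {m : Type*} [Fintype m] [DecidableEq m]
    (f : M → M) (A : M → Matrix m m ℝ) (n : ℕ) (p : M) : EReal :=
  (((n : ℝ)⁻¹ : ℝ) : EReal) * elog (specRad (cocycle f A n p))

/-- The Anosov Closing property for a map of a metric space. -/
def AnosovClosing {M : Type*} [MetricSpace M] (f : M → M) : Prop :=
  ∃ C₁ ε₀ θ : ℝ, 0 < C₁ ∧ 0 < ε₀ ∧ 0 < θ ∧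
    ∀ (z : M) (n : ℕ), dist (f^[n] z) z < ε₀ →
      ∃ p : M, f^[n] p = p ∧ ∀ j ≤ n,
        dist (f^[j] z) (f^[j] p) ≤
          C₁ * Real.exp (-θ * min (j : ℝ) ((n : ℝ) - (j : ℝ))) * dist (f^[n] z) z

/-- `A` is `α`-Hölder continuous (w.r.t. the operator norm on matrices). -/
def IsHolderMat {M : Type*} [MetricSpace M] {m : Type*} [Fintype m] [DecidableEq m]
    (A : M → Matrix m m ℝ) (α : ℝ) : Prop :=
  ∃ C₂ : ℝ, 0 < C₂ ∧ ∀ x y : M, matNorm (A x - A y) ≤ C₂ * dist x y ^ α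

/-- The `i`-th compound (exterior power) matrix of `B`: the matrix of `ΛⁱB` acting on
`Λⁱ(ℝ^d)` in the standard basis of increasing wedges of basis vectors. -/
noncomputable def compound {d : ℕ} (i : ℕ) (B : Matrix (Fin d) (Fin d) ℝ) :
    Matrix {s : Finset (Fin d) // s.card = i} {s : Finset (Fin d) // s.card = i} ℝ :=
  Matrix.of fun S T => Matrix.det (Matrix.of fun a b : Fin i =>
    B (S.1.orderIsoOfFin S.2 a).1 (T.1.orderIsoOfFin T.2 b).1)


section Aux

open EReal in
lemma mul_coe_lt_iff {c : ℝ} (hc : 0 < c) (x : EReal) (y : ℝ) :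
    (c : EReal) * x < (y : EReal) ↔ x < ((c⁻¹ * y : ℝ) : EReal) := by
  induction x using EReal.rec with
  | bot =>
    rw [EReal.mul_bot_of_pos (by exact_mod_cast hc)]
    simp only [EReal.bot_lt_coe]
  | coe r =>
    rw [← EReal.coe_mul, EReal.coe_lt_coe_iff, EReal.coe_lt_coe_iff]
    constructor
    · intro h
      have := mul_lt_mul_of_pos_left h (inv_pos.2 hc)
      rwa [← mul_assoc, inv_mul_cancel₀ hc.ne', one_mul] at this
    · intro h
      have := mul_lt_mul_of_pos_left h hc
      rwa [← mul_assoc, mul_inv_cancel₀ hc.ne', one_mul] at this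
  | top =>
    rw [EReal.mul_top_of_pos (by exact_mod_cast hc)]
    simp [(EReal.coe_lt_top _).not_gt, (EReal.coe_lt_top _).not_gt]

lemma continuous_matNorm {m : Type*} [Fintype m] [DecidableEq m] :
    Continuous fun B : Matrix m m ℝ => matNorm B := by
  have hL : Continuous fun B : Matrix m m ℝ =>
      LinearMap.toContinuousLinearMap (Matrix.toEuclideanLin B) := by
    exact LinearMap.continuous_of_finiteDimensional
      ((LinearMap.toContinuousLinearMap : _ ≃ₗ[ℝ] _).toLinearMap.comp
        (Matrix.toEuclideanLin : Matrix m m ℝ ≃ₗ[ℝ] _).toLinearMap)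
  exact continuous_norm.comp hL

lemma continuous_cocycle {M : Type*} [TopologicalSpace M] {m : Type*} [Fintype m] [DecidableEq m]
    {f : M → M} (hf : Continuous f) {A : M → Matrix m m ℝ} (hA : Continuous A) (n : ℕ) :
    Continuous fun x => cocycle f A n x := by
  induction n with
  | zero => exact continuous_const
  | succ n ih => exact Continuous.matrix_mul (ih.comp hf) hA

lemma trunc_eq_log_max {M' : Type*} (g : M' → ℝ) (m : ℕ) (x : M') :
    (if g x ≤ 0 then -(m : ℝ) else max (Real.log (g x)) (-(m : ℝ)))
      = Real.log (max (g x) (Real.exp (-(m : ℝ)))) := by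
  by_cases h : g x ≤ 0
  · rw [if_pos h, max_eq_right (h.trans (Real.exp_pos _).le), Real.log_exp]
  · rw [if_neg h]
    push_neg at h
    rcases le_total (g x) (Real.exp (-(m : ℝ))) with h2 | h2
    · rw [max_eq_right h2, Real.log_exp, max_eq_right]
      calc Real.log (g x) ≤ Real.log (Real.exp (-(m:ℝ))) := Real.log_le_log h h2
        _ = -(m:ℝ) := Real.log_exp _
    · rw [max_eq_left h2, max_eq_left]
      calc (-(m:ℝ)) = Real.log (Real.exp (-(m:ℝ))) := (Real.log_exp _).symm
        _ ≤ Real.log (g x) := Real.log_le_log (Real.exp_pos _) h2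

end Aux

/-- **Proposition (upper semicontinuity at a measure with `λ₁ = -∞`).**
Let `f` be a continuous map of a compact metric space, `μ` an ergodic `f`-invariant Borel
probability measure and `B` a continuous matrix-valued map with `λ₁(B,μ) = -∞`. If `(μ j)`
is a sequence of ergodic `f`-invariant Borel probability measures converging to `μ` in the
weak* topology, then `λ₁(B, μ j) → -∞`. -/

theorem top_lyapunov_exponent_tendsto_bot_of_weak_star
    {d : ℕ} {M : Type*} [MetricSpace M] [CompactSpace M] [MeasurableSpace M] [BorelSpace M]
    (f : M → M) (hf : Continuous f)
    (μ : Measure M) [IsProbabilityMeasure μ] (hErg : Ergodic f μ)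
    (B : M → Matrix (Fin d) (Fin d) ℝ) (hB : Continuous B)
    (hbot : lyapMax f B μ = ⊥)
    (μs : ℕ → Measure M) (hprob : ∀ j, IsProbabilityMeasure (μs j))
    (hergs : ∀ j, Ergodic f (μs j))
    (hweak : ∀ ψ : M → ℝ, Continuous ψ →
      Tendsto (fun j => ∫ x, ψ x ∂(μs j)) atTop (𝓝 (∫ x, ψ x ∂μ))) :
    Tendsto (fun j => lyapMax f B (μs j)) atTop (𝓝 (⊥ : EReal)) := by

  rw [EReal.tendsto_nhds_bot_iff_real]
  intro K
  have h1 : lyapMax f B μ < (K : EReal) := by rw [hbot]; exact EReal.bot_lt_coe K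
  simp only [lyapMax, iInf_lt_iff] at h1
  obtain ⟨n, hn⟩ := h1
  set c : ℝ := (((n : ℝ) + 1)⁻¹ : ℝ) with hc
  have hcpos : 0 < c := by positivity
  rw [mul_coe_lt_iff hcpos] at hn
  simp only [elogIntegral, iInf_lt_iff] at hn
  obtain ⟨m, hm⟩ := hn
  rw [EReal.coe_lt_coe_iff] at hm
  set g : M → ℝ := fun x => matNorm (cocycle f B (n + 1) x) with hg
  set ψ : M → ℝ := fun x => if g x ≤ 0 then -(m : ℝ) else max (Real.log (g x)) (-(m : ℝ))
    with hψ
  have hψcont : Continuous ψ := by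
    have : ψ = fun x => Real.log (max (g x) (Real.exp (-(m : ℝ)))) :=
      funext (trunc_eq_log_max g m)
    rw [this]
    have hgc : Continuous g := continuous_matNorm.comp (continuous_cocycle hf hB (n + 1))
    exact Real.continuousOn_log.comp_continuous (hgc.max continuous_const)
      (fun x => ne_of_gt (lt_of_lt_of_le (Real.exp_pos _) (le_max_right _ _)))
  have hconv := hweak ψ hψcont
  filter_upwards [hconv.eventually_lt_const hm] with j hj
  have hle1 : lyapMax f B (μs j) ≤ (c : EReal) * elogIntegral (μs j) g := iInf_le _ n
  have hle2 : elogIntegral (μs j) g ≤ ((∫ x, ψ x ∂(μs j) : ℝ) : EReal) := iInf_le _ m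
  have hle3 : (c : EReal) * elogIntegral (μs j) g ≤
      (c : EReal) * ((∫ x, ψ x ∂(μs j) : ℝ) : EReal) :=
    mul_le_mul_of_nonneg_left hle2 (by exact_mod_cast hcpos.le)
  have hlt : (c : EReal) * ((∫ x, ψ x ∂(μs j) : ℝ) : EReal) < (K : EReal) := by
    rw [mul_coe_lt_iff hcpos]; exact_mod_cast hj
  exact lt_of_le_of_lt (hle1.trans hle3) hlt
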